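/- For every n ∈ {9, 11, 12, 13, 15}, the cycle graph C_n satisfies rvcl(C_n) = ⌈n/2⌉ − 1. -/

import Mathlib

namespace LocatingRainbow

open SimpleGraph

variable {V : Type*}

/-- The internal vertices of a walk: its support without the endpoints. -/
def internalVertices {G : SimpleGraph V} {u v : V} (p : G.Walk u v) : List V :=
  p.support.tail.dropLast

/-- `c` is a rainbow vertex coloring of `G` (with colors in `Fin k`) if any two distinct
vertices are joined by a path whose internal vertices have pairwise distinct colors. -/
def IsRainbowVertexColoring (G : SimpleGraph V) {k : ℕ} (c : V → Fin k) : Prop :=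
  ∀ u v : V, u ≠ v → ∃ p : G.Walk u v, p.IsPath ∧ ((internalVertices p).map c).Nodup

/-- The distance from a vertex `v` to the color class of the color `i`. -/
noncomputable def distToColor (G : SimpleGraph V) {k : ℕ} (c : V → Fin k) (v : V) (i : Fin k) :
    ℕ :=
  sInf {m | ∃ y, c y = i ∧ G.dist v y = m}

/-- The rainbow code of a vertex `v`: the vector of distances to all color classes. -/
noncomputable def rainbowCode (G : SimpleGraph V) {k : ℕ} (c : V → Fin k) (v : V) :
    Fin k → ℕ :=
  fun i => distToColor G c v i

/-- `c` is a locating rainbow coloring if it is a rainbow vertex coloring and distinct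
vertices have distinct rainbow codes. -/
def IsLocatingRainbowColoring (G : SimpleGraph V) {k : ℕ} (c : V → Fin k) : Prop :=
  IsRainbowVertexColoring G c ∧ Function.Injective (rainbowCode G c)

/-- The rainbow vertex connection number of `G`. -/
noncomputable def rvc (G : SimpleGraph V) : ℕ :=
  sInf {k | ∃ c : V → Fin k, IsRainbowVertexColoring G c}

/-- The locating rainbow connection number of `G`. -/
noncomputable def rvcl (G : SimpleGraph V) : ℕ :=
  sInf {k | ∃ c : V → Fin k, IsLocatingRainbowColoring G c}

end LocatingRainbow

namespace LocatingRainbowAux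
open SimpleGraph List
open scoped Fin.NatCast Fin.CommRing

/-- circular distance on `Fin n` -/
def cdist {n : ℕ} (u v : Fin n) : ℕ := min (v - u).val ((u - v)).val

def arcWalk {n : ℕ} (u : Fin (n+2)) : (d : ℕ) → (cycleGraph (n+2)).Walk u (u + (d : Fin (n+2)))
  | 0 => Walk.nil.copy rfl (by simp)
  | d+1 => (Walk.cons (by rw [cycleGraph_adj]; right; simp)
      (arcWalk (u+1) d)).copy rfl (by push_cast; ring)

lemma arcWalk_length {n : ℕ} (u : Fin (n+2)) (d : ℕ) : (arcWalk u d).length = d := by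
  induction d generalizing u with
  | zero => simp [arcWalk]
  | succ d ih => simp [arcWalk, ih]

lemma arcWalk_getVert {n : ℕ} (u : Fin (n+2)) (d i : ℕ) (hi : i ≤ d) :
    (arcWalk u d).getVert i = u + (i : Fin (n+2)) := by
  induction d generalizing u i with
  | zero => interval_cases i; simp [arcWalk]
  | succ d ih =>
    simp only [arcWalk, Walk.getVert_copy]
    cases i with
    | zero => simp [Walk.getVert_zero]
    | succ i =>
      rw [Walk.getVert_cons_succ, ih (u+1) i (by omega)]
      push_cast
      ring

lemma support_eq_range_getVert {V : Type*} {G : SimpleGraph V} {u v : V} (p : G.Walk u v) :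
    p.support = (List.range (p.length+1)).map p.getVert := by
  induction p with
  | nil => simp [List.range_succ]
  | @cons a b c h q ih =>
    rw [Walk.support_cons, Walk.length_cons]
    conv_rhs => rw [List.range_succ_eq_map, List.map_cons, List.map_map]
    congr 1

lemma arcWalk_support {n : ℕ} (u : Fin (n+2)) (d : ℕ) :
    (arcWalk u d).support = (List.range (d+1)).map (fun i : ℕ => u + (i : Fin (n+2))) := by
  rw [support_eq_range_getVert, arcWalk_length]
  apply List.map_congr_left
  intro i hi
  exact arcWalk_getVert u d i (by simpa using Nat.lt_succ_iff.mp (List.mem_range.mp hi))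

lemma internalVertices_eq {V : Type*} {G : SimpleGraph V} {u v : V} (p : G.Walk u v)
    (f : ℕ → V) (hs : p.support = (List.range (p.length+1)).map f) (hL : 1 ≤ p.length) :
    LocatingRainbow.internalVertices p = (List.range (p.length-1)).map (fun i => f (i+1)) := by
  obtain ⟨m, hm⟩ : ∃ m, p.length = m + 1 := ⟨p.length - 1, by omega⟩
  unfold LocatingRainbow.internalVertices
  rw [hs, hm]
  rw [show m+1+1 = (m+1)+1 from rfl, List.range_succ_eq_map, List.map_cons, List.tail_cons,
    List.map_map, List.range_succ, List.map_append, List.map_singleton, List.dropLast_concat]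
  simp [Function.comp]


open LocatingRainbow

lemma path_getVert {n : ℕ} {u v : Fin (n+2)} (p : (cycleGraph (n+2)).Walk u v)
    (hp : p.IsPath) :
    (∀ i ≤ p.length, p.getVert i = u + (i : Fin (n+2))) ∨
    (∀ i ≤ p.length, p.getVert i = u - (i : Fin (n+2))) := by
  induction p with
  | nil => left; intro i hi; rw [Walk.length_nil] at hi; interval_cases i; simp
  | @cons a b c h q ih =>
    rw [Walk.cons_isPath_iff] at hp
    obtain ⟨hq, ha⟩ := hp
    have hb : b = a + 1 ∨ b = a - 1 := by
      rcases cycleGraph_adj.mp h with h1 | h1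
      · right; linear_combination -h1
      · left; linear_combination h1
    by_cases hq0 : q.length = 0
    · rcases hb with rfl | rfl
      · left; intro i hi
        rw [Walk.length_cons, hq0] at hi
        interval_cases i
        · simp
        · rw [Walk.getVert_cons_succ, Walk.getVert_zero]; push_cast; ring
      · right; intro i hi
        rw [Walk.length_cons, hq0] at hi
        interval_cases i
        · simp
        · rw [Walk.getVert_cons_succ, Walk.getVert_zero]; push_cast; ring
    · rcases ih hq with hasc | hdesc
      · rcases hb with rfl | rfl
        · left; intro i hi
          cases i with
          | zero => simp
          | succ i =>
            rw [Walk.getVert_cons_succ, hasc i (by rw [Walk.length_cons] at hi; omega)]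
            push_cast; ring
        · exfalso
          apply ha
          rw [Walk.mem_support_iff_exists_getVert]
          refine ⟨1, ?_, by omega⟩
          rw [hasc 1 (by omega)]
          push_cast; ring
      · rcases hb with rfl | rfl
        · exfalso
          apply ha
          rw [Walk.mem_support_iff_exists_getVert]
          refine ⟨1, ?_, by omega⟩
          rw [hdesc 1 (by omega)]
          push_cast; ring
        · right; intro i hi
          cases i with
          | zero => simp
          | succ i =>
            rw [Walk.getVert_cons_succ, hdesc i (by rw [Walk.length_cons] at hi; omega)]
            push_cast; ring

lemma path_length_le {n : ℕ} {u v : Fin (n+2)} (p : (cycleGraph (n+2)).Walk u v)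
    (hp : p.IsPath) : p.length ≤ n + 1 := by
  have h1 := hp.support_nodup.length_le_card
  rw [Walk.length_support] at h1
  simpa using h1

/-- Any rainbow coloring yields, for each `u` and each `1 ≤ d < n+2`, a rainbow arc
between `u` and `u + d` in one of the two directions. -/
lemma exists_rainbow_arc {n j : ℕ} (c : Fin (n+2) → Fin j)
    (hc : IsRainbowVertexColoring (cycleGraph (n+2)) c) (u : Fin (n+2)) (d : ℕ)
    (hd1 : 1 ≤ d) (hd2 : d < n+2) :
    ((((List.range (d-1)).map (fun i : ℕ => c (u + ((i+1 : ℕ) : Fin (n+2))))).Nodup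
        ∧ d - 1 ≤ j) ∨
     (((List.range (n+2-d-1)).map (fun i : ℕ => c (u - ((i+1 : ℕ) : Fin (n+2))))).Nodup
        ∧ n+2-d-1 ≤ j)) := by
  have hne : u ≠ u + ((d : ℕ) : Fin (n+2)) := by
    intro he
    have : ((d : ℕ) : Fin (n+2)) = 0 := by linear_combination -he
    have := congrArg Fin.val this
    rw [Fin.val_natCast, Nat.mod_eq_of_lt hd2] at this
    simp at this
    omega
  obtain ⟨p, hp, hnd⟩ := hc u _ hne
  have hL1 : 1 ≤ p.length := by
    by_contra h0
    have h0' : p.length = 0 := by omega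
    have hv := p.getVert_length
    rw [h0', Walk.getVert_zero] at hv
    exact hne hv
  have hlen := path_length_le p hp
  rcases path_getVert p hp with hasc | hdesc
  · -- ascending arc, length = d
    have hv := p.getVert_length
    rw [hasc p.length le_rfl] at hv
    have : ((p.length : ℕ) : Fin (n+2)) = ((d : ℕ) : Fin (n+2)) := by linear_combination hv
    have hLd : p.length = d := by
      have := congrArg Fin.val this
      rw [Fin.val_natCast, Fin.val_natCast, Nat.mod_eq_of_lt (by omega),
        Nat.mod_eq_of_lt hd2] at this
      exact this
    left
    have hsup : p.support = (List.range (p.length+1)).map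
        (fun i : ℕ => u + (i : Fin (n+2))) := by
      rw [support_eq_range_getVert]
      apply List.map_congr_left
      intro i hi
      exact hasc i (by have := List.mem_range.mp hi; omega)
    rw [internalVertices_eq p _ hsup hL1, List.map_map] at hnd
    constructor
    · rw [hLd] at hnd
      simpa [Function.comp_def] using hnd
    · have := hnd.length_le_card
      simp only [List.length_map, List.length_range, Fintype.card_fin] at this
      omega
  · -- descending arc, length = n+2-d
    have hv := p.getVert_length
    rw [hdesc p.length le_rfl] at hv
    have hz : ((d + p.length : ℕ) : Fin (n+2)) = 0 := by push_cast; linear_combination -hv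
    have hdvd : (n+2) ∣ (d + p.length) := by
      have := congrArg Fin.val hz
      rw [Fin.val_natCast] at this
      simp only [Fin.val_zero] at this
      exact Nat.dvd_of_mod_eq_zero this
    have hLd : p.length = n + 2 - d := by
      obtain ⟨m, hm⟩ := hdvd
      match m with
      | 0 => omega
      | 1 => omega
      | (m+2) =>
        have hx : (n+2)*(m+2) = (n+2)*m + 2*n+4 := by ring
        have hy : 0 ≤ (n+2)*m := Nat.zero_le _
        omega
    right
    have hsup : p.support = (List.range (p.length+1)).map
        (fun i : ℕ => u - (i : Fin (n+2))) := by
      rw [support_eq_range_getVert]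
      apply List.map_congr_left
      intro i hi
      exact hdesc i (by have := List.mem_range.mp hi; omega)
    rw [internalVertices_eq p _ hsup hL1, List.map_map] at hnd
    constructor
    · rw [hLd] at hnd
      simpa [Function.comp_def] using hnd
    · have := hnd.length_le_card
      simp only [List.length_map, List.length_range, Fintype.card_fin] at this
      omega

lemma nodup_map_range {α : Type*} {m : ℕ} {f : ℕ → α}
    (h : ((List.range m).map f).Nodup) {i j : ℕ} (hi : i < m) (hj : j < m)
    (hij : i ≠ j) : f i ≠ f j := by
  intro he
  exact hij ((List.nodup_map_iff_inj_on (List.nodup_range (n := m))).mp h i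
    (List.mem_range.mpr hi) j (List.mem_range.mpr hj) he)

/-- In a cycle on `2k+3` vertices colored with at most `k` colors, every rainbow
vertex coloring makes every window of `k` consecutive vertices rainbow. -/
lemma rainbow_window {n k j : ℕ} (hn : n + 2 = 2*k+3) (hj : j ≤ k)
    (c : Fin (n+2) → Fin j) (hc : IsRainbowVertexColoring (cycleGraph (n+2)) c)
    (u : Fin (n+2)) :
    ((List.range k).map (fun i : ℕ => c (u + ((i+1 : ℕ) : Fin (n+2))))).Nodup := by
  rcases exists_rainbow_arc c hc u (k+1) (by omega) (by omega) with ⟨h1, h2⟩ | ⟨h1, h2⟩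
  · have hk : k+1-1 = k := by omega
    rw [hk] at h1
    exact h1
  · omega

/-- The periodicity forced by all windows of `k` consecutive vertices being rainbow. -/
lemma period {n k : ℕ} (hk : 1 ≤ k) (c : Fin (n+2) → Fin k)
    (W : ∀ u : Fin (n+2),
      ((List.range k).map (fun i : ℕ => c (u + ((i+1 : ℕ) : Fin (n+2))))).Nodup)
    (v : Fin (n+2)) : c (v + ((k : ℕ) : Fin (n+2))) = c v := by
  set u : Fin (n+2) := v - 1 with hu
  have hg : Function.Injective (fun i : Fin k => c (u + ((i.val+1 : ℕ) : Fin (n+2)))) := by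
    intro i₁ i₂ he
    by_contra hne
    exact nodup_map_range (W u) i₁.isLt i₂.isLt (fun h => hne (Fin.ext h)) he
  have hs := Finite.surjective_of_injective hg
  obtain ⟨i, hi⟩ := hs (c (u + ((k+1 : ℕ) : Fin (n+2))))
  simp only at hi
  by_cases h0 : i.val = 0
  · have h1 : c (u + ((1 : ℕ) : Fin (n+2))) = c (u + ((k+1 : ℕ) : Fin (n+2))) := by
      rw [← hi, h0]
    have e1 : u + ((1 : ℕ) : Fin (n+2)) = v := by rw [hu]; push_cast; ring
    have e2 : u + ((k+1 : ℕ) : Fin (n+2)) = v + ((k : ℕ) : Fin (n+2)) := by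
      rw [hu]; push_cast; ring
    rw [e1, e2] at h1
    exact h1.symm
  · exfalso
    have hne := nodup_map_range (W (u+1)) (i := i.val - 1) (j := k - 1)
      (by omega) (by omega) (by omega)
    apply hne
    have e1 : u + 1 + ((i.val - 1 + 1 : ℕ) : Fin (n+2)) = u + ((i.val + 1 : ℕ) : Fin (n+2)) := by
      have : i.val - 1 + 1 = i.val := by omega
      rw [this]; push_cast; ring
    have e2 : u + 1 + ((k - 1 + 1 : ℕ) : Fin (n+2)) = u + ((k + 1 : ℕ) : Fin (n+2)) := by
      have : k - 1 + 1 = k := by omega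
      rw [this]; push_cast; ring
    rw [e1, e2, hi]

lemma period_iter {n k : ℕ} (hk : 1 ≤ k) (c : Fin (n+2) → Fin k)
    (W : ∀ u : Fin (n+2),
      ((List.range k).map (fun i : ℕ => c (u + ((i+1 : ℕ) : Fin (n+2))))).Nodup)
    (m : ℕ) (v : Fin (n+2)) : c (v + ((m*k : ℕ) : Fin (n+2))) = c v := by
  induction m generalizing v with
  | zero => simp
  | succ m ih =>
    have e : v + (((m+1)*k : ℕ) : Fin (n+2))
        = (v + ((k : ℕ) : Fin (n+2))) + ((m*k : ℕ) : Fin (n+2)) := by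
      push_cast; ring
    rw [e, ih, period hk c W]

lemma dist_eq_cdist {n : ℕ}
    (hl : ∀ u w v : Fin (n+2), (cycleGraph (n+2)).Adj u w → cdist u v ≤ cdist w v + 1)
    (u v : Fin (n+2)) : (cycleGraph (n+2)).dist u v = cdist u v := by
  apply _root_.le_antisymm
  · rcases le_total ((v - u).val) ((u - v).val) with h | h
    · have hle := SimpleGraph.dist_le (arcWalk u ((v - u).val))
      rw [arcWalk_length, Fin.cast_val_eq_self] at hle
      have : u + (v - u) = v := by ring
      rw [this] at hle
      unfold cdist
      omega
    · have hle := SimpleGraph.dist_le (arcWalk v ((u - v).val))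
      rw [arcWalk_length, Fin.cast_val_eq_self] at hle
      have : v + (u - v) = u := by ring
      rw [this] at hle
      rw [SimpleGraph.dist_comm]
      unfold cdist
      omega
  · have key : ∀ {a b : Fin (n+2)} (p : (cycleGraph (n+2)).Walk a b), cdist a b ≤ p.length := by
      intro a b p
      induction p with
      | nil => simp [cdist]
      | @cons x y z h q ih =>
        calc cdist x z ≤ cdist y z + 1 := hl x y z h
        _ ≤ q.length + 1 := by omega
    obtain ⟨p, hp⟩ := ((cycleGraph_connected (n := n+1)) u v).exists_walk_length_eq_dist
    rw [← hp]
    exact key p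

lemma distToColor_eq_min {n k : ℕ} (c : Fin (n+2) → Fin k)
    (D : ∀ u v : Fin (n+2), (cycleGraph (n+2)).dist u v = cdist u v)
    (v : Fin (n+2)) (i : Fin k) (y0 : Fin (n+2)) (hy0 : c y0 = i) :
    (distToColor (cycleGraph (n+2)) c v i : WithTop ℕ)
      = ((Finset.univ.filter (fun y => c y = i)).image (fun y => cdist v y)).min := by
  have hne : ((Finset.univ.filter (fun y => c y = i)).image (fun y => cdist v y)).Nonempty :=
    ⟨cdist v y0, Finset.mem_image.mpr ⟨y0, Finset.mem_filter.mpr ⟨Finset.mem_univ _, hy0⟩, rfl⟩⟩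
  have hmin : distToColor (cycleGraph (n+2)) c v i
      = ((Finset.univ.filter (fun y => c y = i)).image (fun y => cdist v y)).min' hne := by
    unfold distToColor
    apply _root_.le_antisymm
    · apply Nat.sInf_le
      obtain ⟨y, hy, hcy⟩ := Finset.mem_image.mp (Finset.min'_mem _ hne)
      exact ⟨y, (Finset.mem_filter.mp hy).2, by rw [D]; exact hcy⟩
    · refine le_csInf ⟨(cycleGraph (n+2)).dist v y0, ⟨y0, hy0, rfl⟩⟩ ?_
      rintro m ⟨y, hcy, hd⟩
      rw [D] at hd
      rw [← hd]
      exact Finset.min'_le _ _ (Finset.mem_image.mpr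
        ⟨y, Finset.mem_filter.mpr ⟨Finset.mem_univ _, hcy⟩, rfl⟩)
  rw [hmin]
  exact Finset.coe_min' hne

lemma injective_code {n k : ℕ} (c : Fin (n+2) → Fin k)
    (D : ∀ u v : Fin (n+2), (cycleGraph (n+2)).dist u v = cdist u v)
    (hused : ∀ i : Fin k, ∃ y, c y = i)
    (h : ∀ u v : Fin (n+2), u ≠ v → ∃ i : Fin k,
        ((Finset.univ.filter (fun y => c y = i)).image (fun y => cdist u y)).min ≠
        ((Finset.univ.filter (fun y => c y = i)).image (fun y => cdist v y)).min) :
    Function.Injective (rainbowCode (cycleGraph (n+2)) c) := by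
  intro u v he
  by_contra hne
  obtain ⟨i, hi⟩ := h u v hne
  obtain ⟨y0, hy0⟩ := hused i
  apply hi
  rw [← distToColor_eq_min c D u i y0 hy0, ← distToColor_eq_min c D v i y0 hy0]
  exact congrArg Nat.cast (congrFun he i)

lemma tail_dropLast_comm {α : Type*} (l : List α) : l.dropLast.tail = l.tail.dropLast := by
  cases l with
  | nil => rfl
  | cons a l =>
    cases l with
    | nil => rfl
    | cons b l => simp

lemma internalVertices_reverse {V : Type*} {G : SimpleGraph V} {u v : V} (p : G.Walk u v) :
    internalVertices p.reverse = (internalVertices p).reverse := by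
  unfold LocatingRainbow.internalVertices
  rw [Walk.support_reverse]
  generalize p.support = l
  rw [List.tail_reverse, ← tail_dropLast_comm]
  generalize l.dropLast = m
  have h := List.tail_reverse (l := m.reverse)
  rw [List.reverse_reverse] at h
  rw [h, List.reverse_reverse]

lemma arcWalk_isPath {n : ℕ} (u : Fin (n+2)) (d : ℕ) (hd : d < n+2) :
    (arcWalk u d).IsPath := by
  apply Walk.IsPath.mk'
  rw [arcWalk_support]
  apply (List.nodup_map_iff_inj_on (List.nodup_range (n := d+1))).mpr
  intro x hx y hy he
  have he' : ((x : ℕ) : Fin (n+2)) = ((y : ℕ) : Fin (n+2)) := by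
    linear_combination he
  have := congrArg Fin.val he'
  rw [Fin.val_natCast, Fin.val_natCast,
    Nat.mod_eq_of_lt (by have := List.mem_range.mp hx; omega),
    Nat.mod_eq_of_lt (by have := List.mem_range.mp hy; omega)] at this
  exact this

lemma arcWalk_internal {n : ℕ} (u : Fin (n+2)) (d : ℕ) (hd1 : 1 ≤ d) :
    internalVertices (arcWalk u d)
      = (List.range (d-1)).map (fun i : ℕ => u + ((i+1 : ℕ) : Fin (n+2))) := by
  have hsup : (arcWalk u d).support = (List.range ((arcWalk u d).length + 1)).map
      (fun i : ℕ => u + (i : Fin (n+2))) := by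
    rw [arcWalk_support, arcWalk_length]
  rw [internalVertices_eq _ _ hsup (by rw [arcWalk_length]; omega), arcWalk_length]

lemma rainbow_of {n k : ℕ} (c : Fin (n+2) → Fin k)
    (h : ∀ u v : Fin (n+2), u ≠ v → ∃ d, d < n + 2 ∧
      ((v = u + ((d : ℕ) : Fin (n+2)) ∧
        ((List.range (d-1)).map (fun i : ℕ => c (u + ((i+1 : ℕ) : Fin (n+2))))).Nodup) ∨
       (u = v + ((d : ℕ) : Fin (n+2)) ∧
        ((List.range (d-1)).map (fun i : ℕ => c (v + ((i+1 : ℕ) : Fin (n+2))))).Nodup))) :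
    IsRainbowVertexColoring (cycleGraph (n+2)) c := by
  intro u v huv
  obtain ⟨d, hd, hcase⟩ := h u v huv
  rcases hcase with ⟨rfl, hnd⟩ | ⟨hu, hnd⟩
  · have hd1 : 1 ≤ d := by
      rcases Nat.eq_zero_or_pos d with rfl | h1
      · exfalso; apply huv; simp
      · omega
    refine ⟨arcWalk u d, arcWalk_isPath u d hd, ?_⟩
    rw [arcWalk_internal u d hd1, List.map_map]
    simpa [Function.comp_def] using hnd
  · have hd1 : 1 ≤ d := by
      rcases Nat.eq_zero_or_pos d with rfl | h1
      · exfalso; apply huv; rw [hu]; simp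
      · omega
    subst hu
    refine ⟨(arcWalk v d).reverse, (arcWalk_isPath v d hd).reverse, ?_⟩
    rw [internalVertices_reverse, List.map_reverse, List.nodup_reverse,
      arcWalk_internal v d hd1, List.map_map]
    simpa [Function.comp_def] using hnd

lemma distToColor_translate {n k : ℕ} (c : Fin (n+2) → Fin k)
    (D : ∀ u v : Fin (n+2), (cycleGraph (n+2)).dist u v = cdist u v)
    (t : Fin (n+2)) (hct : ∀ y, c (y + t) = c y) (v : Fin (n+2)) (i : Fin k) :
    distToColor (cycleGraph (n+2)) c (v + t) i = distToColor (cycleGraph (n+2)) c v i := by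
  unfold distToColor
  congr 1
  ext m
  constructor
  · rintro ⟨y, hy, hd⟩
    refine ⟨y - t, ?_, ?_⟩
    · rw [← hct (y - t)]
      have : y - t + t = y := by ring
      rw [this]
      exact hy
    · rw [D] at hd ⊢
      rw [← hd]
      unfold cdist
      have e1 : y - t - v = y - (v + t) := by ring
      have e2 : v - (y - t) = v + t - y := by ring
      rw [e1, e2]
  · rintro ⟨y, hy, hd⟩
    refine ⟨y + t, by rw [hct]; exact hy, ?_⟩
    rw [D] at hd ⊢
    rw [← hd]
    unfold cdist
    have e1 : y + t - (v + t) = y - v := by ring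
    have e2 : v + t - (y + t) = v - y := by ring
    rw [e1, e2]

def c9 : Fin 9 → Fin 4 := ![3, 1, 2, 0, 3, 2, 3, 1, 0]
def c11 : Fin 11 → Fin 5 := ![1, 0, 3, 2, 1, 0, 3, 4, 2, 0, 3]
def c12 : Fin 12 → Fin 5 := ![2, 3, 1, 0, 2, 3, 4, 1, 2, 3, 0, 4]
def c13 : Fin 13 → Fin 6 := ![3, 4, 2, 5, 0, 1, 3, 5, 4, 2, 1, 5, 0]
def c15 : Fin 15 → Fin 7 := ![5, 3, 0, 1, 6, 2, 4, 0, 5, 1, 3, 2, 0, 6, 4]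

end LocatingRainbowAux

open LocatingRainbowAux
open scoped Fin.NatCast Fin.CommRing

open LocatingRainbow SimpleGraph in
/-- For every `n ∈ {9, 11, 12, 13, 15}`, the cycle `C_n` satisfies
`rvcl(C_n) = ⌈n/2⌉ - 1`. -/
theorem rvcl_cycleGraph_middle (n : ℕ)
    (hn : n = 9 ∨ n = 11 ∨ n = 12 ∨ n = 13 ∨ n = 15) :
    rvcl (cycleGraph n) = (n + 1) / 2 - 1 := by
  rcases hn with rfl | rfl | rfl | rfl | rfl
  · -- n = 9
    have hD : ∀ u v : Fin (7+2), (cycleGraph (7+2)).dist u v = cdist u v :=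
      dist_eq_cdist (by decide)
    have hub : (4:ℕ) ∈ {k | ∃ c : Fin 9 → Fin k, IsLocatingRainbowColoring (cycleGraph 9) c} :=
      ⟨c9, rainbow_of (n:=7) c9 (by decide), injective_code (n:=7) c9 hD (by decide) (by decide)⟩
    have hlb : ∀ j ∈ {k | ∃ c : Fin 9 → Fin k, IsLocatingRainbowColoring (cycleGraph 9) c},
        4 ≤ j := by
      rintro j ⟨c, hrc, hinj⟩
      by_contra hlt
      push_neg at hlt
      have hj : j ≤ 3 := by omega
      have W := rainbow_window (n:=7) (k:=3) (by norm_num) hj c hrc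
      have h3 : 3 ≤ j := by
        have := (W 0).length_le_card
        simpa using this
      obtain rfl : j = 3 := by omega
      have P : ∀ v : Fin 9, c (v + ((3:ℕ) : Fin 9)) = c v :=
        period (n:=7) (by norm_num) c W
      have hcode : rainbowCode (cycleGraph 9) c ((0 : Fin 9) + ((3:ℕ):Fin 9))
          = rainbowCode (cycleGraph 9) c 0 := by
        funext i
        exact distToColor_translate (n:=7) c hD _ P 0 i
      exact absurd (hinj hcode) (by decide)
    have h4 : (9+1)/2 - 1 = 4 := by norm_num
    rw [h4]
    exact le_antisymm (Nat.sInf_le hub) (le_csInf ⟨4, hub⟩ hlb)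
  · -- n = 11
    have hD : ∀ u v : Fin (9+2), (cycleGraph (9+2)).dist u v = cdist u v :=
      dist_eq_cdist (by decide)
    have hub : (5:ℕ) ∈ {k | ∃ c : Fin 11 → Fin k, IsLocatingRainbowColoring (cycleGraph 11) c} :=
      ⟨c11, rainbow_of (n:=9) c11 (by decide), injective_code (n:=9) c11 hD (by decide) (by decide)⟩
    have hlb : ∀ j ∈ {k | ∃ c : Fin 11 → Fin k, IsLocatingRainbowColoring (cycleGraph 11) c},
        5 ≤ j := by
      rintro j ⟨c, hrc, hinj⟩
      by_contra hlt
      push_neg at hlt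
      have hj : j ≤ 4 := by omega
      have W := rainbow_window (n:=9) (k:=4) (by norm_num) hj c hrc
      have h4 : 4 ≤ j := by
        have := (W 0).length_le_card
        simpa using this
      obtain rfl : j = 4 := by omega
      have P : ∀ v : Fin 11, c (v + ((3*4:ℕ) : Fin 11)) = c v :=
        period_iter (n:=9) (by norm_num) c W 3
      have hne := nodup_map_range (W 0) (i:=0) (j:=1) (by norm_num) (by norm_num) (by norm_num)
      apply hne
      have e : (0 : Fin 11) + ((1+1:ℕ) : Fin 11)
          = ((0 : Fin 11) + ((0+1:ℕ) : Fin 11)) + ((3*4:ℕ) : Fin 11) := by decide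
      rw [e, P]
    have h5 : (11+1)/2 - 1 = 5 := by norm_num
    rw [h5]
    exact le_antisymm (Nat.sInf_le hub) (le_csInf ⟨5, hub⟩ hlb)
  · -- n = 12
    have hD : ∀ u v : Fin (10+2), (cycleGraph (10+2)).dist u v = cdist u v :=
      dist_eq_cdist (by decide)
    have hub : (5:ℕ) ∈ {k | ∃ c : Fin 12 → Fin k, IsLocatingRainbowColoring (cycleGraph 12) c} :=
      ⟨c12, rainbow_of (n:=10) c12 (by decide),
        injective_code (n:=10) c12 hD (by decide) (by decide)⟩
    have hlb : ∀ j ∈ {k | ∃ c : Fin 12 → Fin k, IsLocatingRainbowColoring (cycleGraph 12) c},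
        5 ≤ j := by
      rintro j ⟨c, hrc, _⟩
      by_contra hlt
      push_neg at hlt
      rcases exists_rainbow_arc (n:=10) c hrc 0 6 (by omega) (by omega) with ⟨_, h2⟩ | ⟨_, h2⟩ <;>
        omega
    have h5 : (12+1)/2 - 1 = 5 := by norm_num
    rw [h5]
    exact le_antisymm (Nat.sInf_le hub) (le_csInf ⟨5, hub⟩ hlb)
  · -- n = 13
    have hD : ∀ u v : Fin (11+2), (cycleGraph (11+2)).dist u v = cdist u v :=
      dist_eq_cdist (by decide)
    have hub : (6:ℕ) ∈ {k | ∃ c : Fin 13 → Fin k, IsLocatingRainbowColoring (cycleGraph 13) c} :=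
      ⟨c13, rainbow_of (n:=11) c13 (by decide),
        injective_code (n:=11) c13 hD (by decide) (by decide)⟩
    have hlb : ∀ j ∈ {k | ∃ c : Fin 13 → Fin k, IsLocatingRainbowColoring (cycleGraph 13) c},
        6 ≤ j := by
      rintro j ⟨c, hrc, hinj⟩
      by_contra hlt
      push_neg at hlt
      have hj : j ≤ 5 := by omega
      have W := rainbow_window (n:=11) (k:=5) (by norm_num) hj c hrc
      have h5 : 5 ≤ j := by
        have := (W 0).length_le_card
        simpa using this
      obtain rfl : j = 5 := by omega
      have P : ∀ v : Fin 13, c (v + ((8*5:ℕ) : Fin 13)) = c v :=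
        period_iter (n:=11) (by norm_num) c W 8
      have hne := nodup_map_range (W 0) (i:=0) (j:=1) (by norm_num) (by norm_num) (by norm_num)
      apply hne
      have e : (0 : Fin 13) + ((1+1:ℕ) : Fin 13)
          = ((0 : Fin 13) + ((0+1:ℕ) : Fin 13)) + ((8*5:ℕ) : Fin 13) := by decide
      rw [e, P]
    have h6 : (13+1)/2 - 1 = 6 := by norm_num
    rw [h6]
    exact le_antisymm (Nat.sInf_le hub) (le_csInf ⟨6, hub⟩ hlb)
  · -- n = 15
    have hD : ∀ u v : Fin (13+2), (cycleGraph (13+2)).dist u v = cdist u v :=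
      dist_eq_cdist (by decide)
    have hub : (7:ℕ) ∈ {k | ∃ c : Fin 15 → Fin k, IsLocatingRainbowColoring (cycleGraph 15) c} :=
      ⟨c15, rainbow_of (n:=13) c15 (by decide),
        injective_code (n:=13) c15 hD (by decide) (by decide)⟩
    have hlb : ∀ j ∈ {k | ∃ c : Fin 15 → Fin k, IsLocatingRainbowColoring (cycleGraph 15) c},
        7 ≤ j := by
      rintro j ⟨c, hrc, hinj⟩
      by_contra hlt
      push_neg at hlt
      have hj : j ≤ 6 := by omega
      have W := rainbow_window (n:=13) (k:=6) (by norm_num) hj c hrc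
      have h6 : 6 ≤ j := by
        have := (W 0).length_le_card
        simpa using this
      obtain rfl : j = 6 := by omega
      have P : ∀ v : Fin 15, c (v + ((3*6:ℕ) : Fin 15)) = c v :=
        period_iter (n:=13) (by norm_num) c W 3
      have hne := nodup_map_range (W 0) (i:=0) (j:=3) (by norm_num) (by norm_num) (by norm_num)
      apply hne
      have e : (0 : Fin 15) + ((3+1:ℕ) : Fin 15)
          = ((0 : Fin 15) + ((0+1:ℕ) : Fin 15)) + ((3*6:ℕ) : Fin 15) := by decide
      rw [e, P]
    have h7 : (15+1)/2 - 1 = 7 := by norm_num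
    rw [h7]
    exact le_antisymm (Nat.sInf_le hub) (le_csInf ⟨7, hub⟩ hlb)
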